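/- Let G be a 2-generated group containing a normal, non-abelian maximal subgroup M with Z(G) properly contained in Z(M), and let x ∈ M \ Z(M) and y ∈ G \ M. Then x and y lie in distinct connected components of the non-commuting, non-generating graph nc(G) if and only if K ∩ M = Z(M) for every maximal subgroup K of G distinct from M; and if x and y lie in the same connected component of nc(G), then the distance d(x,y) in nc(G) is at most 4. -/

import Mathlib

open Subgroup

namespace NC

variable {G : Type*} [Group G]

/-- The centre of a subgroup `H`, realised as a subgroup of the ambient group `G`. -/
def centerOf (H : Subgroup G) : Subgroup G := H ⊓ Subgroup.centralizer (H : Set G)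

/-- `H` is a maximal subgroup of `K` (both subgroups of the ambient group `G`). -/
def IsMaximalIn (H K : Subgroup G) : Prop :=
  H < K ∧ ∀ T : Subgroup G, H < T → T ≤ K → T = K

/-- The non-commuting, non-generating graph of `G`: vertices `x, y` are adjacent
iff they do not commute and do not generate `G`.  (Central elements are isolated
vertices here; the paper simply removes them from the vertex set.) -/
def ncGraph (G : Type*) [Group G] : SimpleGraph G where
  Adj x y := x * y ≠ y * x ∧ Subgroup.closure {x, y} ≠ ⊤
  symm := by
    constructor
    intro x y h
    exact ⟨fun e => h.1 e.symm, by rw [Set.pair_comm]; exact h.2⟩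
  loopless := by
    constructor
    intro x h
    exact h.1 rfl

/-- The conjugate `g H g⁻¹` of a subgroup `H` by an element `g`. -/
def conjSub (g : G) (H : Subgroup G) : Subgroup G := H.map (MulAut.conj g).toMonoidHom

/-- "The quotient of `G` by the subgroup `H` is cyclic": every coset of `H` is a
power of a fixed coset.  For `H` normal this says exactly that `G/H` is cyclic. -/
def QuotCyclic (H : Subgroup G) : Prop := ∃ g : G, ∀ x : G, ∃ n : ℤ, x⁻¹ * g ^ n ∈ H

/-- `P` is a Sylow `p`-subgroup of `G`. -/
def IsSylowIn (p : ℕ) (P : Subgroup G) : Prop :=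
  IsPGroup p P ∧ ∀ R : Subgroup G, IsPGroup p R → P ≤ R → R = P

/-- The Frattini subgroup of a subgroup `P` (the intersection of the maximal
subgroups of `P`), realised as a subgroup of the ambient group. -/
def phiIn (P : Subgroup G) : Subgroup G := P ⊓ sInf {W : Subgroup G | IsMaximalIn W P}

/-- `G` has exactly two conjugacy classes of maximal subgroups. -/
def TwoMaxClasses (G : Type*) [Group G] : Prop :=
  ∃ K L : Subgroup G, IsCoatom K ∧ IsCoatom L ∧ (∀ g : G, conjSub g K ≠ L) ∧
    ∀ T : Subgroup G, IsCoatom T → (∃ g : G, T = conjSub g K) ∨ (∃ g : G, T = conjSub g L)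

/-- The induced subgraph of the non-commuting, non-generating graph on the
actual vertex set `G \ Z(G)`. -/
def ncSubgraph (G : Type*) [Group G] := (ncGraph G).induce {x : G | x ∉ Subgroup.center G}

section helpers

variable {M : Subgroup G}

lemma mem_centerOf {v : G} : v ∈ centerOf M ↔ v ∈ M ∧ ∀ m ∈ M, m * v = v * m := by
  constructor
  · rintro ⟨h1, h2⟩
    exact ⟨h1, fun m hm => Subgroup.mem_centralizer_iff.1 h2 m hm⟩
  · rintro ⟨h1, h2⟩
    exact ⟨h1, Subgroup.mem_centralizer_iff.2 h2⟩

lemma centerOf_le : centerOf M ≤ M := inf_le_left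

lemma centerOf_comm {z m : G} (hz : z ∈ centerOf M) (hm : m ∈ M) : m * z = z * m :=
  (mem_centerOf.1 hz).2 m hm

lemma centerOf_normal (hMn : M.Normal) : (centerOf M).Normal := by
  constructor
  intro z hz g
  rw [mem_centerOf]
  refine ⟨hMn.conj_mem z (centerOf_le hz) g, ?_⟩
  intro m hm
  have hm' : g⁻¹ * m * g ∈ M := by
    have := hMn.conj_mem m hm g⁻¹
    simpa using this
  have h := centerOf_comm hz hm'
  -- (g⁻¹ m g) z = z (g⁻¹ m g)  ⟹  m (g z g⁻¹) = (g z g⁻¹) m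
  have : m * (g * z * g⁻¹) = g * ((g⁻¹ * m * g) * z) * g⁻¹ := by group
  rw [this, h]
  group

/-- every proper subgroup of a 2-generated group is contained in a maximal one -/
lemma exists_le_coatom (h2gen : ∃ a b : G, Subgroup.closure {a, b} = ⊤)
    {H : Subgroup G} (hH : H ≠ ⊤) : ∃ L : Subgroup G, IsCoatom L ∧ H ≤ L := by
  obtain ⟨a, b, hab⟩ := h2gen
  have zorn := zorn_le_nonempty₀ {T : Subgroup G | T ≠ ⊤} ?_ H hH
  · obtain ⟨L, hHL, hLmax⟩ := zorn
    refine ⟨L, ⟨hLmax.prop, ?_⟩, hHL⟩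
    intro T hLT
    by_contra hT
    exact hLT.2 (hLmax.2 hT hLT.1)
  · intro c hcs hchain T hTc
    refine ⟨sSup c, ?_, fun z hz => le_sSup hz⟩
    intro htop
    have hne : c.Nonempty := ⟨T, hTc⟩
    have hdir : DirectedOn (· ≤ ·) c := hchain.directedOn
    have ha : a ∈ sSup c := htop ▸ Subgroup.mem_top a
    have hb : b ∈ sSup c := htop ▸ Subgroup.mem_top b
    obtain ⟨A, hAc, hA⟩ := (Subgroup.mem_sSup_of_directedOn hne hdir).1 ha
    obtain ⟨B, hBc, hB⟩ := (Subgroup.mem_sSup_of_directedOn hne hdir).1 hb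
    obtain ⟨C, hCc, hAC, hBC⟩ := hdir A hAc B hBc
    have : Subgroup.closure {a, b} ≤ C := by
      rw [Subgroup.closure_le]
      rintro t (rfl | rfl)
      · exact hAC hA
      · exact hBC hB
    rw [hab, top_le_iff] at this
    exact hcs hCc this

end helpers


section helpers2

variable {M : Subgroup G}

/-- centralizer of an element of Z(M)\Z(G) is exactly M -/
lemma centralizer_c (hM : IsCoatom M) {c : G} (hc : c ∈ centerOf M)
    (hcZ : c ∉ Subgroup.center G) : Subgroup.centralizer {c} = M := by
  have hle : M ≤ Subgroup.centralizer {c} := by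
    intro m hm
    rw [Subgroup.mem_centralizer_iff]
    rintro h (rfl : h = c)
    exact (centerOf_comm hc hm).symm
  have hne : Subgroup.centralizer {c} ≠ ⊤ := by
    intro htop
    apply hcZ
    rw [Subgroup.mem_center_iff]
    intro g
    have : g ∈ Subgroup.centralizer {c} := htop ▸ Subgroup.mem_top g
    exact (Subgroup.mem_centralizer_iff.1 this c rfl).symm
  by_contra hne2
  have : M < Subgroup.centralizer {c} := lt_of_le_of_ne hle (fun h => hne2 h.symm)
  exact hne (hM.2 _ this)

lemma c_not_comm (hM : IsCoatom M) {c : G} (hc : c ∈ centerOf M)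
    (hcZ : c ∉ Subgroup.center G) {w : G} (hw : w ∉ M) : c * w ≠ w * c := by
  intro h
  apply hw
  rw [← centralizer_c hM hc hcZ]
  rw [Subgroup.mem_centralizer_iff]
  rintro h' (rfl : h' = c)
  exact h

/-- Fact 3: for g outside M, Z(M)⟨g⟩ is proper. -/
lemma F3 (hMn : M.Normal) (hMna : ∃ a ∈ M, ∃ b ∈ M, a * b ≠ b * a)
    {g : G} (hg : g ∉ M) : centerOf M ⊔ Subgroup.zpowers g ≠ ⊤ := by
  haveI : (centerOf M).Normal := centerOf_normal hMn
  intro htop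
  obtain ⟨a, ha, b, hb, hab⟩ := hMna
  apply hab
  have key : ∀ m ∈ M, ∃ z ∈ centerOf M, ∃ k : ℤ, m = z * g ^ k ∧ g ^ k ∈ M := by
    intro m hm
    have : m ∈ (↑(centerOf M ⊔ Subgroup.zpowers g) : Set G) := by
      rw [htop]; trivial
    rw [Subgroup.normal_mul] at this
    obtain ⟨z, hz, t, ht, hzt⟩ := this
    have hzt' : z * t = m := hzt
    obtain ⟨k, hk⟩ := Subgroup.mem_zpowers_iff.1 ht
    have htM : t ∈ M := by
      have e : t = z⁻¹ * m := by rw [← hzt']; group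
      rw [e]
      exact mul_mem (inv_mem (centerOf_le hz)) hm
    refine ⟨z, hz, k, ?_, ?_⟩
    · rw [hk, hzt']
    · rw [hk]; exact htM
  obtain ⟨z1, hz1, k1, he1, hm1⟩ := key a ha
  obtain ⟨z2, hz2, k2, he2, hm2⟩ := key b hb
  -- a * b = b * a
  rw [he1, he2]
  have c12 : g ^ k1 * g ^ k2 = g ^ k2 * g ^ k1 := by
    rw [← zpow_add, ← zpow_add, add_comm]
  have hz1M : z1 ∈ M := centerOf_le hz1
  have hz2M : z2 ∈ M := centerOf_le hz2
  -- use centrality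
  have e1 : g ^ k1 * z2 = z2 * g ^ k1 := centerOf_comm hz2 hm1
  have e2 : g ^ k2 * z1 = z1 * g ^ k2 := centerOf_comm hz1 hm2
  have e3 : z1 * z2 = z2 * z1 := centerOf_comm hz2 hz1M
  calc z1 * g ^ k1 * (z2 * g ^ k2) = z1 * (g ^ k1 * z2) * g ^ k2 := by group
    _ = z1 * (z2 * g ^ k1) * g ^ k2 := by rw [e1]
    _ = (z1 * z2) * (g ^ k1 * g ^ k2) := by group
    _ = (z2 * z1) * (g ^ k2 * g ^ k1) := by rw [e3, c12]
    _ = z2 * (z1 * g ^ k2) * g ^ k1 := by group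
    _ = z2 * (g ^ k2 * z1) * g ^ k1 := by rw [e2]
    _ = z2 * g ^ k2 * (z1 * g ^ k1) := by group

lemma mem_conjSub {g a : G} {H : Subgroup G} : a ∈ conjSub g H ↔ ∃ h ∈ H, g * h * g⁻¹ = a := by
  simp only [conjSub, Subgroup.mem_map]
  constructor
  · rintro ⟨h, hh, rfl⟩
    exact ⟨h, hh, rfl⟩
  · rintro ⟨h, hh, rfl⟩
    exact ⟨h, hh, rfl⟩

lemma conjSub_mem {g h : G} {H : Subgroup G} (hh : h ∈ H) : g * h * g⁻¹ ∈ conjSub g H :=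
  mem_conjSub.2 ⟨h, hh, rfl⟩

lemma mem_of_conjSub {g a : G} {H : Subgroup G} (ha : a ∈ conjSub g H) : g⁻¹ * a * g ∈ H := by
  obtain ⟨h, hh, rfl⟩ := mem_conjSub.1 ha
  have : g⁻¹ * (g * h * g⁻¹) * g = h := by group
  rw [this]; exact hh

lemma isCoatom_conjSub {K : Subgroup G} (hK : IsCoatom K) (g : G) : IsCoatom (conjSub g K) := by
  constructor
  · intro htop
    apply hK.1
    rw [eq_top_iff]
    intro b _
    have : g * b * g⁻¹ ∈ conjSub g K := htop ▸ Subgroup.mem_top _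
    have h2 := mem_of_conjSub this
    have e : g⁻¹ * (g * b * g⁻¹) * g = b := by group
    rwa [e] at h2
  · intro T hT
    have hKT : K ≤ conjSub g⁻¹ T := by
      intro k hk
      have : g * k * g⁻¹ ∈ T := hT.le (conjSub_mem hk)
      have := conjSub_mem (g := g⁻¹) this
      have e : g⁻¹ * (g * k * g⁻¹) * g⁻¹⁻¹ = k := by group
      rwa [e] at this
    have hne : K ≠ conjSub g⁻¹ T := by
      intro heq
      apply hT.ne
      -- then conjSub g K = T
      apply le_antisymm hT.le
      intro t ht
      have : g⁻¹ * t * g⁻¹⁻¹ ∈ conjSub g⁻¹ T := conjSub_mem ht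
      rw [← heq] at this
      have := conjSub_mem (g := g) this
      have e : g * (g⁻¹ * t * g⁻¹⁻¹) * g⁻¹ = t := by group
      rwa [e] at this
    have := hK.2 _ (lt_of_le_of_ne hKT hne)
    -- conjSub g⁻¹ T = ⊤ ⟹ T = ⊤
    rw [eq_top_iff]
    intro b _
    have : g⁻¹ * b * g ∈ conjSub g⁻¹ T := this ▸ Subgroup.mem_top _
    have h2 := mem_of_conjSub this
    have e : g⁻¹⁻¹ * (g⁻¹ * b * g) * g⁻¹ = b := by group
    rwa [e] at h2

lemma conjSub_M_eq (hMn : M.Normal) (g : G) : conjSub g M = M := by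
  apply le_antisymm
  · intro a ha
    obtain ⟨h, hh, rfl⟩ := mem_conjSub.1 ha
    exact hMn.conj_mem h hh g
  · intro m hm
    have : g * (g⁻¹ * m * g) * g⁻¹ = m := by group
    rw [← this]
    exact conjSub_mem (by simpa using hMn.conj_mem m hm g⁻¹)

end helpers2


section quotient

variable {M : Subgroup G}

lemma quot_subgroups (hM : IsCoatom M) (hMn : M.Normal) :
    ∀ N : Subgroup (G ⧸ M), N = ⊥ ∨ N = ⊤ := by
  intro N
  have hMle : M ≤ N.comap (QuotientGroup.mk' M) := by
    intro m hm
    simp only [Subgroup.mem_comap, QuotientGroup.mk'_apply]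
    have : (QuotientGroup.mk m : G ⧸ M) = 1 := (QuotientGroup.eq_one_iff m).2 hm
    rw [this]
    exact one_mem N
  rcases eq_or_lt_of_le hMle with heq | hlt
  · left
    rw [eq_bot_iff]
    intro q hq
    obtain ⟨g, rfl⟩ := QuotientGroup.mk'_surjective M q
    have : g ∈ N.comap (QuotientGroup.mk' M) := hq
    rw [← heq] at this
    have : (QuotientGroup.mk' M) g = 1 := (QuotientGroup.eq_one_iff g).2 this
    simp [this]
  · right
    have := hM.2 _ hlt
    rw [eq_top_iff]
    intro q _
    obtain ⟨g, rfl⟩ := QuotientGroup.mk'_surjective M q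
    have : g ∈ N.comap (QuotientGroup.mk' M) := this ▸ Subgroup.mem_top g
    exact this

lemma finite_quot (hM : IsCoatom M) (hMn : M.Normal) {y : G} (hy : y ∉ M) :
    Finite (G ⧸ M) := by
  set a : G ⧸ M := QuotientGroup.mk y with ha
  have hane : a ≠ 1 := fun h => hy ((QuotientGroup.eq_one_iff y).1 h)
  have htop : Subgroup.zpowers a = ⊤ :=
    (quot_subgroups hM hMn _).resolve_left (fun h => hane (Subgroup.zpowers_eq_bot.1 h))
  have hfin : IsOfFinOrder a := by
    rcases quot_subgroups hM hMn (Subgroup.zpowers (a * a)) with h | h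
    · have : a * a = 1 := Subgroup.zpowers_eq_bot.1 h
      refine isOfFinOrder_iff_pow_eq_one.2 ⟨2, by norm_num, by rwa [pow_two]⟩
    · have : a ∈ Subgroup.zpowers (a * a) := h ▸ Subgroup.mem_top a
      obtain ⟨k, hk⟩ := Subgroup.mem_zpowers_iff.1 this
      have : a ^ (2 * k - 1) = 1 := by
        have : (a * a) ^ k = a ^ (2 * k) := by
          rw [← pow_two, ← zpow_natCast, ← zpow_mul]
          norm_num
        rw [this] at hk
        rw [zpow_sub, hk]
        group
      rcases eq_or_ne (2 * k - 1) 0 with h0 | h0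
      · omega
      · exact isOfFinOrder_iff_zpow_eq_one.2 ⟨2 * k - 1, h0, this⟩
  have hn : 0 < orderOf a := hfin.orderOf_pos
  apply Finite.of_surjective (fun i : Fin (orderOf a) => a ^ (i : ℕ))
  intro q
  have hq : q ∈ Subgroup.zpowers a := by rw [htop]; trivial
  obtain ⟨k, hk⟩ := Subgroup.mem_zpowers_iff.1 hq
  have hmod : a ^ (k % (orderOf a : ℤ)) = a ^ k := zpow_mod_orderOf a k
  have h0 : 0 ≤ k % (orderOf a : ℤ) := Int.emod_nonneg k (by exact_mod_cast hn.ne')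
  have h1 : k % (orderOf a : ℤ) < orderOf a := Int.emod_lt_of_pos k (by exact_mod_cast hn)
  refine ⟨⟨(k % (orderOf a : ℤ)).toNat, ?_⟩, ?_⟩
  · omega
  · simp only []
    rw [← zpow_natCast]
    rw [Int.toNat_of_nonneg h0, hmod, hk]

lemma card_quot_prime (hM : IsCoatom M) (hMn : M.Normal) {y : G} (hy : y ∉ M) :
    (Nat.card (G ⧸ M)).Prime := by
  haveI := finite_quot hM hMn hy
  set a : G ⧸ M := QuotientGroup.mk y with ha
  have hane : a ≠ 1 := fun h => hy ((QuotientGroup.eq_one_iff y).1 h)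
  have htop : Subgroup.zpowers a = ⊤ :=
    (quot_subgroups hM hMn _).resolve_left (fun h => hane (Subgroup.zpowers_eq_bot.1 h))
  haveI : IsCyclic (G ⧸ M) := ⟨⟨a, fun q => by
    have hq : q ∈ Subgroup.zpowers a := by rw [htop]; trivial
    exact hq⟩⟩
  letI : CommGroup (G ⧸ M) := IsCyclic.commGroup
  haveI : Nontrivial (G ⧸ M) := ⟨⟨a, 1, hane⟩⟩
  haveI : IsSimpleGroup (G ⧸ M) := ⟨fun N _ => quot_subgroups hM hMn N⟩
  exact IsSimpleGroup.prime_card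

lemma pow_card_mem (hM : IsCoatom M) (hMn : M.Normal) (w : G) :
    w ^ Nat.card (G ⧸ M) ∈ M := by
  have h1 : orderOf (QuotientGroup.mk w : G ⧸ M) ∣ Nat.card (G ⧸ M) :=
    orderOf_dvd_natCard _
  have h2 : (QuotientGroup.mk w : G ⧸ M) ^ Nat.card (G ⧸ M) = 1 :=
    orderOf_dvd_iff_pow_eq_one.1 h1
  rw [← QuotientGroup.mk_pow] at h2
  exact (QuotientGroup.eq_one_iff _).1 h2

lemma order_mk_eq (hM : IsCoatom M) (hMn : M.Normal) {w : G} (hw : w ∉ M) :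
    orderOf (QuotientGroup.mk w : G ⧸ M) = Nat.card (G ⧸ M) := by
  have hp := card_quot_prime hM hMn hw
  have h1 : orderOf (QuotientGroup.mk w : G ⧸ M) ∣ Nat.card (G ⧸ M) :=
    orderOf_dvd_natCard _
  rcases (Nat.Prime.eq_one_or_self_of_dvd hp _ h1) with h | h
  · exfalso
    have : (QuotientGroup.mk w : G ⧸ M) = 1 := orderOf_eq_one_iff.1 h
    exact hw ((QuotientGroup.eq_one_iff w).1 this)
  · exact h

lemma zpow_mem_dvd (hM : IsCoatom M) (hMn : M.Normal) {w : G} (hw : w ∉ M)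
    {k : ℤ} (hk : w ^ k ∈ M) : (Nat.card (G ⧸ M) : ℤ) ∣ k := by
  have h2 : (QuotientGroup.mk w : G ⧸ M) ^ k = 1 := by
    rw [← QuotientGroup.mk_zpow]
    exact (QuotientGroup.eq_one_iff _).2 hk
  have := orderOf_dvd_iff_zpow_eq_one.2 h2
  rwa [order_mk_eq hM hMn hw] at this

end quotient


section graph

variable {M : Subgroup G}

lemma adj_M (hM : IsCoatom M) {u v : G} (hu : u ∈ M) (hv : v ∈ M)
    (h : u * v ≠ v * u) : (ncGraph G).Adj u v := by
  refine ⟨h, ?_⟩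
  intro htop
  apply hM.1
  rw [eq_top_iff, ← htop, Subgroup.closure_le]
  rintro t (rfl | rfl)
  · exact hu
  · exact hv

/-- a "c-element" is adjacent to everything outside M -/
lemma adj_c_out (hM : IsCoatom M) (hMn : M.Normal)
    (hMna : ∃ a ∈ M, ∃ b ∈ M, a * b ≠ b * a)
    {c : G} (hc : c ∈ centerOf M) (hcZ : c ∉ Subgroup.center G)
    {w : G} (hw : w ∉ M) : (ncGraph G).Adj c w := by
  refine ⟨c_not_comm hM hc hcZ hw, ?_⟩
  intro htop
  apply F3 hMn hMna hw
  rw [eq_top_iff, ← htop, Subgroup.closure_le]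
  rintro t (rfl | rfl)
  · exact Subgroup.mem_sup_left hc
  · exact Subgroup.mem_sup_right (Subgroup.mem_zpowers t)

/-- within M, noncentral elements are at distance ≤ 2 -/
lemma walkM (hM : IsCoatom M) {u v : G} (hu : u ∈ M) (huZ : u ∉ centerOf M)
    (hv : v ∈ M) (hvZ : v ∉ centerOf M) :
    ∃ p : (ncGraph G).Walk u v, p.length ≤ 2 := by
  rcases eq_or_ne u v with rfl | hne
  · exact ⟨SimpleGraph.Walk.nil, by simp⟩
  rcases ne_or_eq (u * v) (v * u) with hcomm | hcomm
  · exact ⟨SimpleGraph.Walk.cons (adj_M hM hu hv hcomm) SimpleGraph.Walk.nil, by simp⟩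
  -- u and v commute; find a middle vertex
  have ha : ∃ a ∈ M, ¬(a * u = u * a) := by
    by_contra h
    push_neg at h
    exact huZ (mem_centerOf.2 ⟨hu, fun m hm => h m hm⟩)
  have hb : ∃ b ∈ M, ¬(b * v = v * b) := by
    by_contra h
    push_neg at h
    exact hvZ (mem_centerOf.2 ⟨hv, fun m hm => h m hm⟩)
  obtain ⟨a, haM, hau⟩ := ha
  obtain ⟨b, hbM, hbv⟩ := hb
  rcases ne_or_eq (a * v) (v * a) with hav | hav
  · -- a works : u - a - v
    refine ⟨SimpleGraph.Walk.cons (adj_M hM hu haM ?_) (SimpleGraph.Walk.cons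
      (adj_M hM haM hv hav) SimpleGraph.Walk.nil), by simp⟩
    intro h; exact hau h.symm
  rcases ne_or_eq (b * u) (u * b) with hbu | hbu
  · refine ⟨SimpleGraph.Walk.cons (adj_M hM hu hbM fun h => hbu h.symm) (SimpleGraph.Walk.cons
      (adj_M hM hbM hv hbv) SimpleGraph.Walk.nil), by simp⟩
  -- use a * b as middle
  have h1 : u * (a * b) ≠ (a * b) * u := by
    intro h
    apply hau
    -- u a b = a b u, and b u = u b
    have : a * (b * u) = a * (u * b) := by rw [hbu]
    calc a * u = (a * u * b) * b⁻¹ := by group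
      _ = (a * b * u) * b⁻¹ := by rw [mul_assoc a u b, ← hbu, ← mul_assoc]
      _ = (u * a * b) * b⁻¹ := by rw [← h]; group
      _ = u * a := by group
  have h2 : (a * b) * v ≠ v * (a * b) := by
    intro h
    apply hbv
    calc b * v = a⁻¹ * (a * b * v) := by group
      _ = a⁻¹ * (v * (a * b)) := by rw [h]
      _ = a⁻¹ * ((a * v) * b) := by rw [← mul_assoc v a b, ← hav]
      _ = v * b := by group
  exact ⟨SimpleGraph.Walk.cons (adj_M hM hu (mul_mem haM hbM) h1) (SimpleGraph.Walk.cons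
      (adj_M hM (mul_mem haM hbM) hv h2) SimpleGraph.Walk.nil), by simp⟩

end graph


section main

variable {M : Subgroup G}

lemma conjSub_conjSub_inv (g : G) (H : Subgroup G) : conjSub g⁻¹ (conjSub g H) = H := by
  apply le_antisymm
  · intro a ha
    obtain ⟨b, hb, rfl⟩ := mem_conjSub.1 ha
    obtain ⟨h, hh, rfl⟩ := mem_conjSub.1 hb
    have e : g⁻¹ * (g * h * g⁻¹) * g⁻¹⁻¹ = h := by group
    rwa [e]
  · intro h hh
    have e : g⁻¹ * (g * h * g⁻¹) * g⁻¹⁻¹ = h := by group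
    rw [← e]
    exact conjSub_mem (conjSub_mem hh)

/-- Part (i), forward: if all other maximal subgroups meet M in Z(M),
then no path leaves M \ Z(M). -/
lemma T1_noreach (h2gen : ∃ a b : G, Subgroup.closure {a, b} = ⊤)
    (hM : IsCoatom M)
    (hC : ∀ K : Subgroup G, IsCoatom K → K ≠ M → K ⊓ M = centerOf M)
    {x y : G} (hx : x ∈ M) (hxZ : x ∉ centerOf M) (hy : y ∉ M) :
    ¬ (ncGraph G).Reachable x y := by
  have step : ∀ u v : G, (ncGraph G).Adj u v → u ∈ M → u ∉ centerOf M →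
      v ∈ M ∧ v ∉ centerOf M := by
    intro u v hadj huM huZ
    obtain ⟨hcomm, hntop⟩ := hadj
    obtain ⟨L, hL, hle⟩ := exists_le_coatom h2gen hntop
    have huL : u ∈ L := hle (Subgroup.subset_closure (Set.mem_insert _ _))
    have hvL : v ∈ L := hle (Subgroup.subset_closure (Set.mem_insert_of_mem _ rfl))
    have hvM : v ∈ M := by
      by_contra hvM
      have hLM : L ≠ M := fun h => hvM (h ▸ hvL)
      have := hC L hL hLM
      have huZ' : u ∈ centerOf M := this ▸ ⟨huL, huM⟩
      exact huZ huZ'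
    refine ⟨hvM, ?_⟩
    intro hvZ
    exact hcomm (centerOf_comm hvZ huM)
  intro hreach
  obtain ⟨p⟩ := hreach
  have key : ∀ (u v : G) (q : (ncGraph G).Walk u v), u ∈ M → u ∉ centerOf M →
      v ∈ M ∧ v ∉ centerOf M := by
    intro u v q
    induction q with
    | nil => intro h1 h2; exact ⟨h1, h2⟩
    | cons h q ih =>
      intro h1 h2
      obtain ⟨h3, h4⟩ := step _ _ h h1 h2
      exact ih h3 h4
  exact hy (key x y p hx hxZ).1

/-- Part (i) backward + (ii): if some other maximal subgroup meets M beyond Z(M),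
then there is a walk from x to y of length at most 4. -/
lemma T2_walk (h2gen : ∃ a b : G, Subgroup.closure {a, b} = ⊤)
    (hM : IsCoatom M) (hMn : M.Normal)
    (hMna : ∃ a ∈ M, ∃ b ∈ M, a * b ≠ b * a)
    (hZ : Subgroup.center G < centerOf M)
    {x y : G} (hx : x ∈ M) (hxZ : x ∉ centerOf M) (hy : y ∉ M)
    (hKw : ∃ K : Subgroup G, IsCoatom K ∧ K ≠ M ∧ K ⊓ M ≠ centerOf M) :
    ∃ p : (ncGraph G).Walk x y, p.length ≤ 4 := by
  classical
  haveI hZnormal : (centerOf M).Normal := centerOf_normal hMn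
  obtain ⟨c, hcZM, hcZG⟩ := SetLike.exists_of_lt hZ
  obtain ⟨K, hKco, hKM, hKne⟩ := hKw
  -- extract u0 ∈ (K ⊓ M) \ Z
  have hu0 : ∃ u0, u0 ∈ K ∧ u0 ∈ M ∧ u0 ∉ centerOf M := by
    by_cases hle : K ⊓ M ≤ centerOf M
    · exfalso
      have hZK : ¬ centerOf M ≤ K := by
        intro hZK
        exact hKne (le_antisymm hle (le_inf hZK centerOf_le))
      have hsup : centerOf M ⊔ K = ⊤ := by
        apply hKco.2
        rcases lt_or_eq_of_le (le_sup_right : K ≤ centerOf M ⊔ K) with h | h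
        · exact h
        · exact absurd (sup_eq_right.1 h.symm) hZK
      obtain ⟨a, ha, b, hb, hab⟩ := hMna
      apply hab
      have key : ∀ m ∈ M, m ∈ centerOf M := by
        intro m hm
        have : m ∈ (↑(centerOf M ⊔ K) : Set G) := by rw [hsup]; trivial
        rw [Subgroup.normal_mul] at this
        obtain ⟨z, hz, t, ht, hzt⟩ := this
        have hzt' : z * t = m := hzt
        have hzZ : z ∈ centerOf M := hz
        have htM : t ∈ M := by
          have e : t = z⁻¹ * m := by rw [← hzt']; group
          rw [e]; exact mul_mem (inv_mem (centerOf_le hzZ)) hm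
        have htZ : t ∈ centerOf M := hle ⟨ht, htM⟩
        rw [← hzt']
        exact mul_mem hzZ htZ
      exact (centerOf_comm (key a ha) hb).symm
    · obtain ⟨u0, hu0KM, hu0Z⟩ := SetLike.not_le_iff_exists.1 hle
      exact ⟨u0, hu0KM.1, hu0KM.2, hu0Z⟩
  obtain ⟨u0, hu0K, hu0M, hu0Z⟩ := hu0
  -- CASE S3 : y is adjacent to some noncentral element of M
  by_cases hS3 : ∃ v, v ∈ M ∧ v ∉ centerOf M ∧ v * y ≠ y * v ∧ Subgroup.closure {v, y} ≠ ⊤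
  · obtain ⟨v, hvM, hvZ, hvy, hcl⟩ := hS3
    obtain ⟨q, hq⟩ := walkM hM hx hxZ hvM hvZ
    refine ⟨q.append (SimpleGraph.Walk.cons (show (ncGraph G).Adj v y from ⟨hvy, hcl⟩) SimpleGraph.Walk.nil), ?_⟩
    rw [SimpleGraph.Walk.length_append]
    simp only [SimpleGraph.Walk.length_cons, SimpleGraph.Walk.length_nil]
    omega
  -- CASE S4 : crossing edge whose M-part does not commute with x
  by_cases hS4 : ∃ v w, v ∈ M ∧ v * x ≠ x * v ∧ w ∉ M ∧ v * w ≠ w * v ∧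
      Subgroup.closure {v, w} ≠ ⊤
  · obtain ⟨v, w, hvM, hvx, hwM, hvw, hcl⟩ := hS4
    have e1 : (ncGraph G).Adj x v := adj_M hM hx hvM (fun h => hvx h.symm)
    have e2 : (ncGraph G).Adj v w := ⟨hvw, hcl⟩
    have e3 : (ncGraph G).Adj w c := (adj_c_out hM hMn hMna hcZM hcZG hwM).symm
    have e4 : (ncGraph G).Adj c y := adj_c_out hM hMn hMna hcZM hcZG hy
    refine ⟨SimpleGraph.Walk.cons e1 (SimpleGraph.Walk.cons e2 (SimpleGraph.Walk.cons e3
      (SimpleGraph.Walk.cons e4 SimpleGraph.Walk.nil))), by simp⟩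
  -- Otherwise : derive a contradiction
  exfalso
  push_neg at hS3 hS4
  -- L1 : every maximal subgroup other than M meets M inside C(x)
  have L1 : ∀ L : Subgroup G, IsCoatom L → L ≠ M → ∀ u, u ∈ L → u ∈ M → u * x = x * u := by
    intro L hL hLM u huL huM
    by_contra hux
    have hLnM : ¬ L ≤ M := by
      intro hle
      exact hM.1 (hL.2 M (lt_of_le_of_ne hle hLM))
    obtain ⟨w0, hw0L, hw0M⟩ := SetLike.not_le_iff_exists.1 hLnM
    have hcom : ∀ w ∈ L, w ∉ M → u * w = w * u := by
      intro w hwL hwM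
      by_contra hc
      have := hS4 u w huM hux hwM hc
      apply hL.1
      rw [eq_top_iff, ← this, Subgroup.closure_le]
      rintro t (rfl | rfl)
      · exact huL
      · exact hwL
    have hLC : L ≤ Subgroup.centralizer {u} := by
      intro l hl
      rw [Subgroup.mem_centralizer_iff]
      intro h hh
      rw [Set.mem_singleton_iff] at hh
      rw [hh]
      by_cases hlM : l ∈ M
      · have hlw0 : l * w0 ∉ M := by
          intro hmem
          apply hw0M
          have e : w0 = l⁻¹ * (l * w0) := by group
          rw [e]; exact mul_mem (inv_mem hlM) hmem
        have h1 := hcom (l * w0) (mul_mem hl hw0L) hlw0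
        have h2 := hcom w0 hw0L hw0M
        -- u (l w0) = (l w0) u  and  u w0 = w0 u  ⟹  u l = l u
        have : (u * l) * w0 = (l * u) * w0 := by
          calc (u * l) * w0 = u * (l * w0) := by group
            _ = (l * w0) * u := h1
            _ = l * (w0 * u) := by group
            _ = l * (u * w0) := by rw [← h2]
            _ = (l * u) * w0 := by group
        exact mul_right_cancel this
      · exact hcom l hl hlM
    have hCne : Subgroup.centralizer {u} ≠ ⊤ := by
      intro htop
      apply hux
      have : x ∈ Subgroup.centralizer {u} := by rw [htop]; trivial
      exact Subgroup.mem_centralizer_iff.1 this u rfl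
    have hLeq : L = Subgroup.centralizer {u} := by
      by_contra hne
      exact hCne (hL.2 _ (lt_of_le_of_ne hLC hne))
    have hcL : c ∈ L := by
      rw [hLeq, Subgroup.mem_centralizer_iff]
      intro h hh
      rw [Set.mem_singleton_iff] at hh
      rw [hh]
      exact centerOf_comm hcZM huM
    have ha1 : (u * c) * x ≠ x * (u * c) := by
      intro h
      apply hux
      have hcx : x * c = c * x := centerOf_comm hcZM hx
      have : (u * x) * c = (x * u) * c := by
        calc (u * x) * c = u * (x * c) := by group
          _ = u * (c * x) := by rw [hcx]
          _ = (u * c) * x := by group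
          _ = x * (u * c) := h
          _ = (x * u) * c := by group
      exact mul_right_cancel this
    have ha2 : (u * c) * w0 ≠ w0 * (u * c) := by
      intro h
      apply c_not_comm hM hcZM hcZG hw0M
      have h2 := hcom w0 hw0L hw0M
      have : u * (c * w0) = u * (w0 * c) := by
        calc u * (c * w0) = (u * c) * w0 := by group
          _ = w0 * (u * c) := h
          _ = (w0 * u) * c := by group
          _ = (u * w0) * c := by rw [← h2]
          _ = u * (w0 * c) := by group
      exact mul_left_cancel this
    have hucM : u * c ∈ M := mul_mem huM (centerOf_le hcZM)
    have := hS4 (u * c) w0 hucM ha1 hw0M ha2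
    apply hL.1
    rw [eq_top_iff, ← this, Subgroup.closure_le]
    rintro t (rfl | rfl)
    · exact mul_mem huL hcL
    · exact hw0L
  -- (29) : every maximal subgroup contains Z(M)
  have hZle : ∀ L : Subgroup G, IsCoatom L → centerOf M ≤ L := by
    intro L hL
    by_cases hLM : L = M
    · rw [hLM]; exact centerOf_le
    by_contra hnle
    have hsup : centerOf M ⊔ L = ⊤ := by
      apply hL.2
      rcases lt_or_eq_of_le (le_sup_right : L ≤ centerOf M ⊔ L) with h | h
      · exact h
      · exact absurd (sup_eq_right.1 h.symm) hnle
    apply hxZ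
    rw [mem_centerOf]
    refine ⟨hx, ?_⟩
    intro m hm
    have : m ∈ (↑(centerOf M ⊔ L) : Set G) := by rw [hsup]; trivial
    rw [Subgroup.normal_mul] at this
    obtain ⟨z, hz, l, hl, hzl⟩ := this
    have hzl' : z * l = m := hzl
    have hzZ : z ∈ centerOf M := hz
    have hlM : l ∈ M := by
      have e : l = z⁻¹ * m := by rw [← hzl']; group
      rw [e]; exact mul_mem (inv_mem (centerOf_le hzZ)) hm
    have h1 : l * x = x * l := L1 L hL hLM l hl hlM
    have h2 : x * z = z * x := centerOf_comm hzZ hx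
    rw [← hzl']
    calc (z * l) * x = z * (l * x) := by group
      _ = z * (x * l) := by rw [h1]
      _ = (z * x) * l := by group
      _ = (x * z) * l := by rw [← h2]
      _ = x * (z * l) := by group
  have hcK : c ∈ K := hZle K hKco hcZM
  -- build u1
  have hu1 : ∃ u1, u1 ∈ K ∧ u1 ∈ M ∧ u1 ∉ centerOf M ∧ u1 * y ≠ y * u1 := by
    by_cases hcomm0 : u0 * y = y * u0
    · refine ⟨u0 * c, mul_mem hu0K hcK, mul_mem hu0M (centerOf_le hcZM), ?_, ?_⟩
      · intro h
        apply hu0Z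
        have e : u0 = (u0 * c) * c⁻¹ := by group
        rw [e]; exact mul_mem h (inv_mem hcZM)
      · intro h
        apply c_not_comm hM hcZM hcZG hy
        have : u0 * (c * y) = u0 * (y * c) := by
          calc u0 * (c * y) = (u0 * c) * y := by group
            _ = y * (u0 * c) := h
            _ = (y * u0) * c := by group
            _ = (u0 * y) * c := by rw [← hcomm0]
            _ = u0 * (y * c) := by group
        exact mul_left_cancel this
    · exact ⟨u0, hu0K, hu0M, hu0Z, hcomm0⟩
  obtain ⟨u1, hu1K, hu1M, hu1Z, hu1y⟩ := hu1
  have hgen : Subgroup.closure {u1, y} = ⊤ := hS3 u1 hu1M hu1Z hu1y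
  set p : ℕ := Nat.card (G ⧸ M) with hp_def
  -- all conjugates of u1 centralize x
  have hWu1 : ∀ g : G, (g * u1 * g⁻¹) * x = x * (g * u1 * g⁻¹) := by
    intro g
    have hco : IsCoatom (conjSub g K) := isCoatom_conjSub hKco g
    have hne : conjSub g K ≠ M := by
      intro h
      apply hKM
      have := congrArg (conjSub g⁻¹) h
      rw [conjSub_conjSub_inv, conjSub_M_eq hMn g⁻¹] at this
      exact this
    exact L1 _ hco hne _ (conjSub_mem hu1K) (hMn.conj_mem u1 hu1M g)
  -- all conjugates of y^p centralize x
  have hWy : ∀ g : G, (g * y * g⁻¹) ^ p * x = x * (g * y * g⁻¹) ^ p := by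
    intro g
    have hgyM : g * y * g⁻¹ ∉ M := by
      intro h
      apply hy
      have h2 := hMn.conj_mem _ h g⁻¹
      have e : g⁻¹ * (g * y * g⁻¹) * g⁻¹⁻¹ = y := by group
      rwa [e] at h2
    obtain ⟨L, hL, hle⟩ := exists_le_coatom h2gen (F3 hMn hMna hgyM)
    have hLne : L ≠ M := by
      intro h
      exact hgyM (h ▸ hle (Subgroup.mem_sup_right (Subgroup.mem_zpowers _)))
    have hpowL : (g * y * g⁻¹) ^ p ∈ L := by
      apply hle
      apply Subgroup.mem_sup_right
      exact Subgroup.mem_zpowers_iff.2 ⟨(p : ℤ), by rw [zpow_natCast]⟩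
    exact L1 L hL hLne _ hpowL (pow_card_mem hM hMn _)
  -- the normal closure of {u1, y^p}
  set E : Subgroup G := Subgroup.normalClosure {u1, y ^ p} with hE_def
  have hEW : ∀ e ∈ E, e * x = x * e := by
    have hsub : Group.conjugatesOfSet {u1, y ^ p} ⊆ ↑(Subgroup.centralizer {x}) := by
      intro t ht
      rw [Group.mem_conjugatesOfSet_iff] at ht
      obtain ⟨b, hb, hconj⟩ := ht
      obtain ⟨gg, hgg⟩ := isConj_iff.1 hconj
      rw [SetLike.mem_coe, Subgroup.mem_centralizer_iff]
      intro h hh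
      rw [Set.mem_singleton_iff] at hh
      rw [hh]
      rcases hb with rfl | rfl
      · rw [← hgg]; exact (hWu1 gg).symm
      · rw [← hgg, ← conj_pow]
        exact (hWy gg).symm
    have hEle : E ≤ Subgroup.centralizer {x} := (Subgroup.closure_le _).2 hsub
    intro e he
    exact (Subgroup.mem_centralizer_iff.1 (hEle he) x rfl).symm
  haveI := hMn
  have hEM : E ≤ M := by
    apply Subgroup.normalClosure_le_normal
    rintro t (rfl | rfl)
    · exact hu1M
    · exact pow_card_mem hM hMn y
  have hEtop : E ⊔ Subgroup.zpowers y = ⊤ := by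
    rw [eq_top_iff, ← hgen, Subgroup.closure_le]
    rintro t (rfl | rfl)
    · exact Subgroup.mem_sup_left (Subgroup.subset_normalClosure (Set.mem_insert _ _))
    · exact Subgroup.mem_sup_right (Subgroup.mem_zpowers _)
  -- conclude M ≤ C(x), contradiction
  apply hxZ
  rw [mem_centerOf]
  refine ⟨hx, ?_⟩
  intro m hm
  have : m ∈ (↑(E ⊔ Subgroup.zpowers y) : Set G) := by rw [hEtop]; trivial
  rw [Subgroup.normal_mul] at this
  obtain ⟨e, he, t, ht, het⟩ := this
  have het' : e * t = m := het
  obtain ⟨k, hk⟩ := Subgroup.mem_zpowers_iff.1 ht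
  have hykM : y ^ k ∈ M := by
    rw [hk]
    have ee : t = e⁻¹ * m := by rw [← het']; group
    rw [ee]
    exact mul_mem (inv_mem (hEM he)) hm
  obtain ⟨q, hq⟩ := zpow_mem_dvd hM hMn hy hykM
  have hykE : y ^ k ∈ E := by
    rw [hq, zpow_mul, zpow_natCast]
    refine Subgroup.zpow_mem _ ?_ q
    exact Subgroup.subset_normalClosure (Set.mem_insert_of_mem _ rfl)
  have hmE : m ∈ E := by
    rw [← het', ← hk]
    exact mul_mem he hykE
  exact hEW m hmE

end main


/-- Proposition 4.10(i),(ii) / `prop:xydist`. -/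
theorem statement_17 (h2gen : ∃ a b : G, Subgroup.closure {a, b} = ⊤)
    {M : Subgroup G} (hM : IsCoatom M) (hMn : M.Normal)
    (hMna : ∃ a ∈ M, ∃ b ∈ M, a * b ≠ b * a)
    (hZ : Subgroup.center G < centerOf M)
    {x y : G} (hx : x ∈ M) (hxZ : x ∉ centerOf M) (hy : y ∉ M) :
    (¬ (ncGraph G).Reachable x y ↔
        ∀ K : Subgroup G, IsCoatom K → K ≠ M → K ⊓ M = centerOf M) ∧
      ((ncGraph G).Reachable x y → (ncGraph G).dist x y ≤ 4) := by
  classical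
  have hT2 : (¬ ∀ K : Subgroup G, IsCoatom K → K ≠ M → K ⊓ M = centerOf M) →
      ∃ p : (ncGraph G).Walk x y, p.length ≤ 4 := by
    intro hC
    push_neg at hC
    obtain ⟨K, hK1, hK2, hK3⟩ := hC
    exact T2_walk h2gen hM hMn hMna hZ hx hxZ hy ⟨K, hK1, hK2, hK3⟩
  constructor
  · constructor
    · intro hnr
      by_contra hC
      obtain ⟨p, _⟩ := hT2 hC
      exact hnr ⟨p⟩
    · intro hC
      exact T1_noreach h2gen hM hC hx hxZ hy
  · intro hreach
    by_cases hC : ∀ K : Subgroup G, IsCoatom K → K ≠ M → K ⊓ M = centerOf M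
    · exact absurd hreach (T1_noreach h2gen hM hC hx hxZ hy)
    · obtain ⟨p, hp⟩ := hT2 hC
      exact le_trans (SimpleGraph.dist_le p) hp

end NC
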